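/- For every ε > 0 there exists a constant C > 0 such that for all integers n ≥ 2, all real t ≥ C·n², and all x ∈ Λ_n, one has |(exp(tΔ_n)𝟙)(x) − φ̂_𝟏(x)·e^{−λ_𝟏 t}| ≤ ε·e^{−λ_𝟏 t}, where exp(tΔ_n) is the matrix exponential of tΔ_n and 𝟙 ∈ ℝ^{Λ_n} is the all-ones vector; thus the survival probability of the rate-1 continuous-time simple random walk on Λ_n killed at ∂Λ_n, started at x and run for time t, equals φ̂_𝟏(x)e^{−λ_𝟏 t} up to an error that is o(e^{−λ_𝟏 t}) when n² = o(t). -/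

import Mathlib

open scoped BigOperators

namespace DGFFStmt

/-- The interior box `Λ_n = {1,…,n−1}²`, encoded with `Fin (n-1) × Fin (n-1)`;
the lattice coordinate of `x` is `((x.1 : ℤ) + 1, (x.2 : ℤ) + 1)`. -/
abbrev Lam (n : ℕ) := Fin (n - 1) × Fin (n - 1)

/-- Lattice coordinates of a point of `Λ_n`. -/
def coord (n : ℕ) (x : Lam n) : ℤ × ℤ := (((x.1 : ℕ) : ℤ) + 1, ((x.2 : ℕ) : ℤ) + 1)

/-- Adjacency in `ℤ²`: Euclidean distance 1. -/
def adj (p q : ℤ × ℤ) : Prop := (p.1 - q.1) ^ 2 + (p.2 - q.2) ^ 2 = 1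

instance (p q : ℤ × ℤ) : Decidable (adj p q) := by unfold adj; infer_instance

/-- The discrete Laplacian `Δ_n` on `Λ_n`. -/
noncomputable def Delta (n : ℕ) : Matrix (Lam n) (Lam n) ℝ :=
  Matrix.of fun x y =>
    if x = y then -1 else if adj (coord n x) (coord n y) then (1 : ℝ) / 4 else 0

/-- `λ_𝟏 = 1 − cos(π/n)`. -/
noncomputable def lamOne (n : ℕ) : ℝ := 1 - Real.cos (Real.pi / n)

/-- `φ_1(k) = √(2/n)·sin(kπ/n)` (the `i = 1` one–dimensional eigenvector). -/
noncomputable def phi1 (n k : ℕ) : ℝ := Real.sqrt (2 / n) * Real.sin (k * Real.pi / n)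

/-- `φ_𝟏(x) = φ_1(x₁)·φ_1(x₂)`. -/
noncomputable def phiOne (n : ℕ) (x : Lam n) : ℝ :=
  phi1 n ((x.1 : ℕ) + 1) * phi1 n ((x.2 : ℕ) + 1)

/-- `φ̂_𝟏(x) = φ_𝟏(x)·∑_y φ_𝟏(y)`. -/
noncomputable def phiHatOne (n : ℕ) (x : Lam n) : ℝ :=
  phiOne n x * ∑ y : Lam n, phiOne n y


open NormedSpace in
lemma exp_mulVec_eig {N : Type*} [Fintype N] [DecidableEq N] (B : Matrix N N ℝ) (v : N → ℝ)
    (c : ℝ) (h : B.mulVec v = c • v) :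
    (exp B).mulVec v = Real.exp c • v := by
  letI : SeminormedRing (Matrix N N ℝ) := Matrix.linftyOpSemiNormedRing
  letI : NormedRing (Matrix N N ℝ) := Matrix.linftyOpNormedRing
  letI : NormedAlgebra ℝ (Matrix N N ℝ) := Matrix.linftyOpNormedAlgebra
  have hpow : ∀ k : ℕ, (B ^ k).mulVec v = c ^ k • v := by
    intro k
    induction k with
    | zero => simp [Matrix.one_mulVec]
    | succ k ih =>
        rw [pow_succ', ← Matrix.mulVec_mulVec, ih, Matrix.mulVec_smul, h, smul_smul, ← pow_succ]
  let L : Matrix N N ℝ →L[ℝ] (N → ℝ) :=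
    { toLinearMap :=
        { toFun := fun M => M.mulVec v
          map_add' := fun A B => Matrix.add_mulVec A B v
          map_smul' := fun r A => Matrix.smul_mulVec r A v }
      cont := Continuous.matrix_mulVec continuous_id continuous_const }
  have hL : ∀ M : Matrix N N ℝ, L M = M.mulVec v := fun _ => rfl
  have hsum := expSeries_summable' (𝕂 := ℝ) B
  rw [exp_eq_tsum ℝ, ← hL, L.map_tsum hsum]
  have key : ∀ k : ℕ, L ((k.factorial : ℝ)⁻¹ • B ^ k) = ((k.factorial : ℝ)⁻¹ * c ^ k) • v := by
    intro k
    rw [map_smul, hL, hpow, smul_smul]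
  have hs : Summable fun z : ℕ => (z.factorial : ℝ)⁻¹ * c ^ z := by
    simpa [smul_eq_mul] using expSeries_summable' (𝕂 := ℝ) c
  rw [tsum_congr key, Summable.tsum_smul_const hs]
  congr 1
  rw [Real.exp_eq_exp_ℝ, exp_eq_tsum ℝ]
  simp [smul_eq_mul]

noncomputable def phiZ (n i : ℕ) (k : ℤ) : ℝ :=
  Real.sqrt (2 / n) * Real.sin (k * i * Real.pi / n)

noncomputable def PhiI (n : ℕ) (i : Lam n) (x : Lam n) : ℝ :=
  phiZ n ((i.1 : ℕ) + 1) (coord n x).1 * phiZ n ((i.2 : ℕ) + 1) (coord n x).2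

noncomputable def lamI (n : ℕ) (i : Lam n) : ℝ :=
  1 - (Real.cos (((i.1 : ℕ) + 1) * Real.pi / n) + Real.cos (((i.2 : ℕ) + 1) * Real.pi / n)) / 2

lemma phiZ_zero (n i : ℕ) : phiZ n i 0 = 0 := by simp [phiZ]

lemma phiZ_n {n : ℕ} (hn : n ≠ 0) (i : ℕ) : phiZ n i ((n : ℕ) : ℤ) = 0 := by
  unfold phiZ
  have h : (((n:ℕ):ℤ):ℝ) * i * Real.pi / n = i * Real.pi := by
    have : ((n:ℕ):ℝ) ≠ 0 := Nat.cast_ne_zero.mpr hn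
    push_cast
    field_simp
  rw [h, Real.sin_nat_mul_pi, mul_zero]

lemma phiZ_rec (n i : ℕ) (k : ℤ) :
    phiZ n i (k + 1) + phiZ n i (k - 1) = 2 * Real.cos (i * Real.pi / n) * phiZ n i k := by
  unfold phiZ
  push_cast
  rw [show ((k:ℝ) + 1) * i * Real.pi / n = k * i * Real.pi / n + i * Real.pi / n by ring,
      show ((k:ℝ) - 1) * i * Real.pi / n = k * i * Real.pi / n - i * Real.pi / n by ring,
      Real.sin_add, Real.sin_sub]
  ring

lemma sq_sum_one (u w : ℤ) (h : u ^ 2 + w ^ 2 = 1) :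
    (u = 1 ∧ w = 0) ∨ (u = -1 ∧ w = 0) ∨ (u = 0 ∧ w = 1) ∨ (u = 0 ∧ w = -1) := by
  have h2 : u ≤ 1 := by nlinarith [sq_nonneg u, sq_nonneg w]
  have h3 : -1 ≤ u := by nlinarith [sq_nonneg u, sq_nonneg w]
  have h4 : w ≤ 1 := by nlinarith [sq_nonneg u, sq_nonneg w]
  have h5 : -1 ≤ w := by nlinarith [sq_nonneg u, sq_nonneg w]
  interval_cases u <;> interval_cases w <;> (revert h; norm_num)

lemma adj_iff (p q : ℤ × ℤ) : adj p q ↔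
    q = (p.1 + 1, p.2) ∨ q = (p.1 - 1, p.2) ∨ q = (p.1, p.2 + 1) ∨ q = (p.1, p.2 - 1) := by
  obtain ⟨a, b⟩ := p; obtain ⟨c, d⟩ := q
  unfold adj
  simp only [Prod.mk.injEq]
  constructor
  · intro h
    rcases sq_sum_one _ _ h with ⟨h1, h2⟩ | ⟨h1, h2⟩ | ⟨h1, h2⟩ | ⟨h1, h2⟩ <;> omega
  · rintro (⟨rfl, rfl⟩ | ⟨rfl, rfl⟩ | ⟨rfl, rfl⟩ | ⟨rfl, rfl⟩) <;> ring

lemma coord_injective (n : ℕ) : Function.Injective (coord n) := by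
  intro x y h
  simp only [coord, Prod.mk.injEq] at h
  have h1 : (x.1 : ℕ) = y.1 := by omega
  have h2 : (x.2 : ℕ) = y.2 := by omega
  exact Prod.ext (Fin.ext h1) (Fin.ext h2)

lemma mem_image_coord {n : ℕ} (q : ℤ × ℤ) :
    q ∈ Finset.image (coord n) Finset.univ ↔
      1 ≤ q.1 ∧ q.1 ≤ (n : ℤ) - 1 ∧ 1 ≤ q.2 ∧ q.2 ≤ (n : ℤ) - 1 := by
  constructor
  · rintro hq
    obtain ⟨y, -, rfl⟩ := Finset.mem_image.1 hq
    have h1 := y.1.isLt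
    have h2 := y.2.isLt
    simp only [coord]
    refine ⟨by omega, ?_, by omega, ?_⟩ <;> omega
  · rintro ⟨h1, h2, h3, h4⟩
    have hn : 2 ≤ n := by omega
    refine Finset.mem_image.2 ⟨(⟨(q.1 - 1).toNat, by omega⟩, ⟨(q.2 - 1).toNat, by omega⟩),
      Finset.mem_univ _, ?_⟩
    simp only [coord]
    rw [Prod.ext_iff]
    constructor <;> · simp only []; omega

lemma coord_bounds {n : ℕ} (x : Lam n) :
    1 ≤ (coord n x).1 ∧ (coord n x).1 ≤ (n : ℤ) - 1 ∧
    1 ≤ (coord n x).2 ∧ (coord n x).2 ≤ (n : ℤ) - 1 :=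
  (mem_image_coord _).1 (Finset.mem_image_of_mem _ (Finset.mem_univ x))


lemma adj_mem_iff (p q : ℤ × ℤ) :
    adj p q ↔ q ∈ ({(p.1 + 1, p.2), (p.1 - 1, p.2), (p.1, p.2 + 1), (p.1, p.2 - 1)} :
      Finset (ℤ × ℤ)) := by
  rw [adj_iff]
  simp [Finset.mem_insert]

lemma sum_adj {n : ℕ} (hn : 2 ≤ n) (x : Lam n) (F : ℤ × ℤ → ℝ)
    (hF : ∀ q : ℤ × ℤ, q.1 = 0 ∨ q.1 = (n : ℤ) ∨ q.2 = 0 ∨ q.2 = (n : ℤ) → F q = 0) :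
    ∑ y : Lam n, (if adj (coord n x) (coord n y) then F (coord n y) else 0)
      = F ((coord n x).1 + 1, (coord n x).2) + F ((coord n x).1 - 1, (coord n x).2)
        + F ((coord n x).1, (coord n x).2 + 1) + F ((coord n x).1, (coord n x).2 - 1) := by
  obtain ⟨hx1, hx2, hx3, hx4⟩ := coord_bounds x
  set p := coord n x with hp
  have key : ∑ y : Lam n, (if adj p (coord n y) then F (coord n y) else 0)
      = ∑ q ∈ Finset.image (coord n) Finset.univ, (if adj p q then F q else 0) :=
    (Finset.sum_image (f := fun q => if adj p q then F q else 0)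
      (fun a _ b _ h => coord_injective n h)).symm
  rw [key, ← Finset.sum_filter]
  set N : Finset (ℤ × ℤ) := {(p.1 + 1, p.2), (p.1 - 1, p.2), (p.1, p.2 + 1), (p.1, p.2 - 1)}
    with hN
  have hsub : Finset.filter (fun q => adj p q) (Finset.image (coord n) Finset.univ) ⊆ N := by
    intro q hq
    exact (adj_mem_iff p q).1 (Finset.mem_filter.1 hq).2
  have hzero : ∀ q ∈ N, q ∉ Finset.filter (fun q => adj p q)
      (Finset.image (coord n) Finset.univ) → F q = 0 := by
    intro q hqN hq
    have hadj : adj p q := (adj_mem_iff p q).2 hqN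
    have hqim : q ∉ Finset.image (coord n) Finset.univ := by
      intro hmem
      exact hq (Finset.mem_filter.2 ⟨hmem, hadj⟩)
    rw [mem_image_coord] at hqim
    push_neg at hqim
    apply hF
    simp only [hN, Finset.mem_insert, Finset.mem_singleton] at hqN
    rcases hqN with rfl | rfl | rfl | rfl <;> simp only [] <;> omega
  rw [Finset.sum_subset hsub hzero, hN]
  have d1 : ((p.1 + 1, p.2) : ℤ × ℤ) ∉ ({(p.1 - 1, p.2), (p.1, p.2 + 1), (p.1, p.2 - 1)} :
      Finset (ℤ × ℤ)) := by simp only [Finset.mem_insert, Finset.mem_singleton, Prod.mk.injEq, not_or]; omega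
  have d2 : ((p.1 - 1, p.2) : ℤ × ℤ) ∉ ({(p.1, p.2 + 1), (p.1, p.2 - 1)} :
      Finset (ℤ × ℤ)) := by simp only [Finset.mem_insert, Finset.mem_singleton, Prod.mk.injEq, not_or]; omega
  have d3 : ((p.1, p.2 + 1) : ℤ × ℤ) ∉ ({(p.1, p.2 - 1)} : Finset (ℤ × ℤ)) := by
    simp only [Finset.mem_insert, Finset.mem_singleton, Prod.mk.injEq, not_or]; omega
  rw [Finset.sum_insert d1, Finset.sum_insert d2, Finset.sum_insert d3, Finset.sum_singleton]
  ring

lemma delta_mulVec {n : ℕ} (hn : 2 ≤ n) (i : Lam n) :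
    (Delta n).mulVec (PhiI n i) = (-(lamI n i)) • PhiI n i := by
  have hn0 : n ≠ 0 := by omega
  funext x
  have hentry : ∀ y : Lam n, Delta n x y = (if x = y then (-1 : ℝ) else 0)
      + (if adj (coord n x) (coord n y) then (1 : ℝ) / 4 else 0) := by
    intro y
    simp only [Delta, Matrix.of_apply]
    by_cases h : x = y
    · subst h
      have hne : ¬ adj (coord n x) (coord n x) := by simp [adj]
      simp [hne]
    · simp [h]
  have hsum : (Delta n).mulVec (PhiI n i) x
      = ∑ y : Lam n, ((if x = y then (-1 : ℝ) else 0) * PhiI n i y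
          + (if adj (coord n x) (coord n y) then (1 : ℝ) / 4 else 0) * PhiI n i y) := by
    simp only [Matrix.mulVec, dotProduct]
    exact Finset.sum_congr rfl fun y _ => by rw [hentry y, add_mul]
  rw [hsum, Finset.sum_add_distrib]
  have h1 : ∑ y : Lam n, (if x = y then (-1 : ℝ) else 0) * PhiI n i y = - PhiI n i x := by
    simp only [ite_mul, zero_mul]
    rw [Finset.sum_ite_eq Finset.univ x (fun y => (-1 : ℝ) * PhiI n i y)]
    simp
  have h2 : ∑ y : Lam n, (if adj (coord n x) (coord n y) then (1 : ℝ) / 4 else 0) * PhiI n i y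
      = (1 : ℝ) / 4 * (phiZ n ((i.1 : ℕ) + 1) ((coord n x).1 + 1) * phiZ n ((i.2 : ℕ) + 1) (coord n x).2
        + phiZ n ((i.1 : ℕ) + 1) ((coord n x).1 - 1) * phiZ n ((i.2 : ℕ) + 1) (coord n x).2
        + phiZ n ((i.1 : ℕ) + 1) (coord n x).1 * phiZ n ((i.2 : ℕ) + 1) ((coord n x).2 + 1)
        + phiZ n ((i.1 : ℕ) + 1) (coord n x).1 * phiZ n ((i.2 : ℕ) + 1) ((coord n x).2 - 1)) := by
    have key := sum_adj hn x (fun q => phiZ n ((i.1 : ℕ) + 1) q.1 * phiZ n ((i.2 : ℕ) + 1) q.2) ?_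
    · calc ∑ y : Lam n, (if adj (coord n x) (coord n y) then (1 : ℝ) / 4 else 0) * PhiI n i y
          = ∑ y : Lam n, (1 : ℝ) / 4 *
            (if adj (coord n x) (coord n y)
              then phiZ n ((i.1 : ℕ) + 1) (coord n y).1 * phiZ n ((i.2 : ℕ) + 1) (coord n y).2
              else 0) := by
            refine Finset.sum_congr rfl fun y _ => ?_
            by_cases h : adj (coord n x) (coord n y) <;> simp [h, PhiI]
        _ = (1 : ℝ) / 4 * ∑ y : Lam n,
            (if adj (coord n x) (coord n y)
              then phiZ n ((i.1 : ℕ) + 1) (coord n y).1 * phiZ n ((i.2 : ℕ) + 1) (coord n y).2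
              else 0) := (Finset.mul_sum _ _ _).symm
        _ = _ := by rw [key]
    · intro q hq
      rcases hq with h | h | h | h
      · rw [h, phiZ_zero]; ring
      · rw [h, phiZ_n hn0]; ring
      · rw [h, phiZ_zero]; ring
      · rw [h, phiZ_n hn0]; ring
  rw [h1, h2]
  have r1 := phiZ_rec n ((i.1 : ℕ) + 1) (coord n x).1
  have r2 := phiZ_rec n ((i.2 : ℕ) + 1) (coord n x).2
  simp only [PhiI, lamI, Pi.smul_apply, smul_eq_mul]
  push_cast at r1 r2 ⊢
  linear_combination (phiZ n ((i.2 : ℕ) + 1) (coord n x).2 / 4) * r1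
    + (phiZ n ((i.1 : ℕ) + 1) (coord n x).1 / 4) * r2

lemma cos_telescope (θ : ℝ) (m : ℕ) :
    2 * Real.sin (θ / 2) * ∑ j ∈ Finset.range m, Real.cos (((j : ℝ) + 1) * θ)
      = Real.sin (((m : ℝ) + 1 / 2) * θ) - Real.sin (θ / 2) := by
  rw [Finset.mul_sum]
  have e : ∀ j ∈ Finset.range m, 2 * Real.sin (θ / 2) * Real.cos (((j : ℝ) + 1) * θ)
      = (fun k : ℕ => Real.sin (((k : ℝ) + 1 / 2) * θ)) (j + 1)
        - (fun k : ℕ => Real.sin (((k : ℝ) + 1 / 2) * θ)) j := by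
    intro j _
    simp only []
    rw [show (((j + 1 : ℕ) : ℝ) + 1 / 2) * θ = ((j : ℝ) + 1) * θ + θ / 2 by push_cast; ring,
        show (((j : ℕ) : ℝ) + 1 / 2) * θ = ((j : ℝ) + 1) * θ - θ / 2 by push_cast; ring,
        Real.sin_add, Real.sin_sub]
    ring
  rw [Finset.sum_congr rfl e, Finset.sum_range_sub (fun k : ℕ => Real.sin (((k : ℝ) + 1 / 2) * θ))]
  norm_num
  rw [show 1 / 2 * θ = θ / 2 by ring]

lemma cos_sum_eval {n : ℕ} (hn : 2 ≤ n) (m : ℕ) (hm0 : 0 < m) (hm : m < 2 * n) :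
    ∑ j ∈ Finset.range (n - 1), Real.cos (((j : ℝ) + 1) * m * Real.pi / n)
      = if m % 2 = 0 then (-1 : ℝ) else 0 := by
  have hnR : (0 : ℝ) < n := by
    have : 0 < n := by omega
    exact_mod_cast this
  set θ := (m : ℝ) * Real.pi / n with hθ
  have hsin : 0 < Real.sin (θ / 2) := by
    apply Real.sin_pos_of_pos_of_lt_pi
    · have : 0 < (m : ℝ) := by exact_mod_cast hm0
      rw [hθ]; positivity
    · rw [hθ]
      rw [div_div, div_lt_iff₀ (by positivity)]
      have h1 : (m : ℝ) < 2 * n := by exact_mod_cast hm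
      calc (m : ℝ) * Real.pi < (2 * n) * Real.pi := by
            exact mul_lt_mul_of_pos_right h1 Real.pi_pos
        _ = Real.pi * (n * 2) := by ring
  have tel := cos_telescope θ (n - 1)
  have hconv : ∑ j ∈ Finset.range (n - 1), Real.cos (((j : ℝ) + 1) * θ)
      = ∑ j ∈ Finset.range (n - 1), Real.cos (((j : ℝ) + 1) * m * Real.pi / n) := by
    refine Finset.sum_congr rfl fun j _ => ?_
    congr 1
    rw [hθ]; ring
  rw [hconv] at tel
  have harg : (((n - 1 : ℕ) : ℝ) + 1 / 2) * θ = (m : ℝ) * Real.pi - θ / 2 := by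
    have h1 : ((n - 1 : ℕ) : ℝ) = (n : ℝ) - 1 := by
      have : 1 ≤ n := by omega
      push_cast [this]; ring
    rw [h1, hθ]
    field_simp
    ring
  rw [harg] at tel
  have hms : Real.sin ((m : ℝ) * Real.pi - θ / 2) = -((-1) ^ m * Real.sin (θ / 2)) :=
    Real.sin_nat_mul_pi_sub (θ / 2) m
  rw [hms] at tel
  have h2s : (2 : ℝ) * Real.sin (θ / 2) ≠ 0 := by positivity
  have goal_eq : ∑ j ∈ Finset.range (n - 1), Real.cos (((j : ℝ) + 1) * m * Real.pi / n)
      = (-(-1 : ℝ) ^ m - 1) / 2 := by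
    apply mul_left_cancel₀ h2s
    rw [tel]
    ring
  rw [goal_eq]
  rcases Nat.even_or_odd m with he | ho
  · rw [if_pos (Nat.even_iff.1 he), Even.neg_one_pow he]
    norm_num
  · rw [if_neg (by simpa [Nat.odd_iff] using ho), Odd.neg_one_pow ho]
    norm_num


lemma key_prod {n : ℕ} (hn : 2 ≤ n) (a b j : ℕ) :
    phiZ n (j + 1) (a : ℤ) * phiZ n (j + 1) (b : ℤ)
      = 1 / (n : ℝ) * (Real.cos (((j : ℝ) + 1) * ((a : ℝ) - b) * Real.pi / n)
          - Real.cos (((j : ℝ) + 1) * ((a : ℝ) + b) * Real.pi / n)) := by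
  have hnR : (0 : ℝ) < n := by
    have : 0 < n := by omega
    exact_mod_cast this
  have h2n : Real.sqrt (2 / n) * Real.sqrt (2 / n) = 2 / (n : ℝ) :=
    Real.mul_self_sqrt (by positivity)
  unfold phiZ
  push_cast
  rw [show ((j : ℝ) + 1) * ((a : ℝ) - b) * Real.pi / n
        = (a : ℝ) * ((j : ℝ) + 1) * Real.pi / n - (b : ℝ) * ((j : ℝ) + 1) * Real.pi / n by ring,
      show ((j : ℝ) + 1) * ((a : ℝ) + b) * Real.pi / n
        = (a : ℝ) * ((j : ℝ) + 1) * Real.pi / n + (b : ℝ) * ((j : ℝ) + 1) * Real.pi / n by ring,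
      Real.cos_sub, Real.cos_add]
  linear_combination (Real.sin ((a : ℝ) * ((j : ℝ) + 1) * Real.pi / n)
    * Real.sin ((b : ℝ) * ((j : ℝ) + 1) * Real.pi / n)) * h2n

lemma oneD_complete {n : ℕ} (hn : 2 ≤ n) (a b : ℕ) (ha : 1 ≤ a) (ha' : a ≤ n - 1)
    (hb : 1 ≤ b) (hb' : b ≤ n - 1) :
    ∑ j ∈ Finset.range (n - 1), phiZ n (j + 1) (a : ℤ) * phiZ n (j + 1) (b : ℤ)
      = if a = b then 1 else 0 := by
  have hnR : (0 : ℝ) < n := by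
    have : 0 < n := by omega
    exact_mod_cast this
  rw [Finset.sum_congr rfl (fun j _ => key_prod hn a b j)]
  rcases eq_or_ne a b with rfl | hne
  · rw [if_pos rfl]
    have e : ∀ j ∈ Finset.range (n - 1),
        1 / (n : ℝ) * (Real.cos (((j : ℝ) + 1) * ((a : ℝ) - a) * Real.pi / n)
          - Real.cos (((j : ℝ) + 1) * ((a : ℝ) + a) * Real.pi / n))
        = 1 / (n : ℝ) * (1 - Real.cos (((j : ℝ) + 1) * ((2 * a : ℕ) : ℝ) * Real.pi / n)) := by
      intro j _
      have h1 : ((j : ℝ) + 1) * ((a : ℝ) - a) * Real.pi / n = 0 := by ring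
      have h2 : ((j : ℝ) + 1) * ((a : ℝ) + a) * Real.pi / n
          = ((j : ℝ) + 1) * ((2 * a : ℕ) : ℝ) * Real.pi / n := by push_cast; ring
      rw [h1, h2, Real.cos_zero]
    rw [Finset.sum_congr rfl e, ← Finset.mul_sum, Finset.sum_sub_distrib,
      Finset.sum_const, Finset.card_range]
    rw [cos_sum_eval hn (2 * a) (by omega) (by omega)]
    rw [if_pos (by omega)]
    have hcard : ((n - 1 : ℕ) : ℝ) = (n : ℝ) - 1 := by
      have : 1 ≤ n := by omega
      push_cast [this]; ring
    rw [nsmul_eq_mul, hcard]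
    field_simp
    ring
  · rw [if_neg hne]
    -- wlog via symmetry in the cos expression: cos is even in (a-b)
    rcases Nat.lt_or_ge b a with hba | hba
    · have e : ∀ j ∈ Finset.range (n - 1),
          1 / (n : ℝ) * (Real.cos (((j : ℝ) + 1) * ((a : ℝ) - b) * Real.pi / n)
            - Real.cos (((j : ℝ) + 1) * ((a : ℝ) + b) * Real.pi / n))
          = 1 / (n : ℝ) * (Real.cos (((j : ℝ) + 1) * ((a - b : ℕ) : ℝ) * Real.pi / n)
            - Real.cos (((j : ℝ) + 1) * ((a + b : ℕ) : ℝ) * Real.pi / n)) := by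
        intro j _
        have h1 : ((a : ℝ) - b) = ((a - b : ℕ) : ℝ) := by
          have : b ≤ a := by omega
          push_cast [this]; ring
        have h2 : ((a : ℝ) + b) = ((a + b : ℕ) : ℝ) := by push_cast; ring
        rw [h1, h2]
      rw [Finset.sum_congr rfl e, ← Finset.mul_sum, Finset.sum_sub_distrib,
        cos_sum_eval hn (a - b) (by omega) (by omega),
        cos_sum_eval hn (a + b) (by omega) (by omega)]
      have hpar : (a - b) % 2 = (a + b) % 2 := by omega
      rcases Nat.even_or_odd (a + b) with hp | hp
      · have hp2 : (a + b) % 2 = 0 := Nat.even_iff.1 hp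
        rw [if_pos (by omega), if_pos hp2]
        ring
      · have hp2 : (a + b) % 2 = 1 := Nat.odd_iff.1 hp
        rw [if_neg (by omega), if_neg (by omega)]
        ring
    · have e : ∀ j ∈ Finset.range (n - 1),
          1 / (n : ℝ) * (Real.cos (((j : ℝ) + 1) * ((a : ℝ) - b) * Real.pi / n)
            - Real.cos (((j : ℝ) + 1) * ((a : ℝ) + b) * Real.pi / n))
          = 1 / (n : ℝ) * (Real.cos (((j : ℝ) + 1) * ((b - a : ℕ) : ℝ) * Real.pi / n)
            - Real.cos (((j : ℝ) + 1) * ((a + b : ℕ) : ℝ) * Real.pi / n)) := by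
        intro j _
        have h1 : ((j : ℝ) + 1) * ((a : ℝ) - b) * Real.pi / n
            = -(((j : ℝ) + 1) * ((b - a : ℕ) : ℝ) * Real.pi / n) := by
          have : a ≤ b := by omega
          push_cast [this]; ring
        have h2 : ((a : ℝ) + b) = ((a + b : ℕ) : ℝ) := by push_cast; ring
        rw [h1, h2, Real.cos_neg]
      rw [Finset.sum_congr rfl e, ← Finset.mul_sum, Finset.sum_sub_distrib,
        cos_sum_eval hn (b - a) (by omega) (by omega),
        cos_sum_eval hn (a + b) (by omega) (by omega)]
      have hpar : (b - a) % 2 = (a + b) % 2 := by omega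
      rcases Nat.even_or_odd (a + b) with hp | hp
      · have hp2 : (a + b) % 2 = 0 := Nat.even_iff.1 hp
        rw [if_pos (by omega), if_pos hp2]
        ring
      · have hp2 : (a + b) % 2 = 1 := Nat.odd_iff.1 hp
        rw [if_neg (by omega), if_neg (by omega)]
        ring


lemma sum_PhiI_mul {n : ℕ} (hn : 2 ≤ n) (x y : Lam n) :
    ∑ i : Lam n, PhiI n i x * PhiI n i y = (if x = y then (1 : ℝ) else 0) := by
  have hxl1 := x.1.isLt
  have hxl2 := x.2.isLt
  have hyl1 := y.1.isLt
  have hyl2 := y.2.isLt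
  have hx1 : (coord n x).1 = (((x.1 : ℕ) + 1 : ℕ) : ℤ) := by simp [coord]
  have hx2 : (coord n x).2 = (((x.2 : ℕ) + 1 : ℕ) : ℤ) := by simp [coord]
  have hy1 : (coord n y).1 = (((y.1 : ℕ) + 1 : ℕ) : ℤ) := by simp [coord]
  have hy2 : (coord n y).2 = (((y.2 : ℕ) + 1 : ℕ) : ℤ) := by simp [coord]
  have conv1 : (∑ i1 : Fin (n - 1),
        phiZ n ((i1 : ℕ) + 1) (coord n x).1 * phiZ n ((i1 : ℕ) + 1) (coord n y).1)
      = ∑ j ∈ Finset.range (n - 1),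
          phiZ n (j + 1) ((((x.1 : ℕ) + 1 : ℕ)) : ℤ) * phiZ n (j + 1) ((((y.1 : ℕ) + 1 : ℕ)) : ℤ) := by
    rw [hx1, hy1]
    exact Fin.sum_univ_eq_sum_range
      (fun j => phiZ n (j + 1) ((((x.1 : ℕ) + 1 : ℕ)) : ℤ)
        * phiZ n (j + 1) ((((y.1 : ℕ) + 1 : ℕ)) : ℤ)) (n - 1)
  have conv2 : (∑ i2 : Fin (n - 1),
        phiZ n ((i2 : ℕ) + 1) (coord n x).2 * phiZ n ((i2 : ℕ) + 1) (coord n y).2)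
      = ∑ j ∈ Finset.range (n - 1),
          phiZ n (j + 1) ((((x.2 : ℕ) + 1 : ℕ)) : ℤ) * phiZ n (j + 1) ((((y.2 : ℕ) + 1 : ℕ)) : ℤ) := by
    rw [hx2, hy2]
    exact Fin.sum_univ_eq_sum_range
      (fun j => phiZ n (j + 1) ((((x.2 : ℕ) + 1 : ℕ)) : ℤ)
        * phiZ n (j + 1) ((((y.2 : ℕ) + 1 : ℕ)) : ℤ)) (n - 1)
  calc ∑ i : Lam n, PhiI n i x * PhiI n i y
      = ∑ i1 : Fin (n - 1), ∑ i2 : Fin (n - 1),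
          (phiZ n ((i1 : ℕ) + 1) (coord n x).1 * phiZ n ((i1 : ℕ) + 1) (coord n y).1) *
          (phiZ n ((i2 : ℕ) + 1) (coord n x).2 * phiZ n ((i2 : ℕ) + 1) (coord n y).2) := by
        rw [Fintype.sum_prod_type]
        exact Finset.sum_congr rfl fun i1 _ => Finset.sum_congr rfl fun i2 _ => by
          simp only [PhiI]; ring
    _ = (∑ i1 : Fin (n - 1),
          phiZ n ((i1 : ℕ) + 1) (coord n x).1 * phiZ n ((i1 : ℕ) + 1) (coord n y).1) *
        (∑ i2 : Fin (n - 1),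
          phiZ n ((i2 : ℕ) + 1) (coord n x).2 * phiZ n ((i2 : ℕ) + 1) (coord n y).2) := by
        rw [Finset.sum_mul_sum]
    _ = (if (x.1 : ℕ) + 1 = (y.1 : ℕ) + 1 then (1 : ℝ) else 0) *
        (if (x.2 : ℕ) + 1 = (y.2 : ℕ) + 1 then (1 : ℝ) else 0) := by
        rw [conv1, conv2, oneD_complete hn _ _ (by omega) (by omega) (by omega) (by omega),
          oneD_complete hn _ _ (by omega) (by omega) (by omega) (by omega)]
    _ = (if x = y then (1 : ℝ) else 0) := by
        by_cases hxy : x = y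
        · subst hxy; simp
        · have hne : ¬((x.1 : ℕ) + 1 = (y.1 : ℕ) + 1 ∧ (x.2 : ℕ) + 1 = (y.2 : ℕ) + 1) := by
            rintro ⟨h1, h2⟩
            exact hxy (Prod.ext (Fin.ext (by omega)) (Fin.ext (by omega)))
          rw [if_neg hxy]
          rcases not_and_or.1 hne with h | h
          · rw [if_neg h]; ring
          · rw [if_neg h]; ring

lemma abs_PhiI_le {n : ℕ} (hn : 2 ≤ n) (i y : Lam n) : |PhiI n i y| ≤ 2 / n := by
  have hnR : (0 : ℝ) < n := by
    have : 0 < n := by omega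
    exact_mod_cast this
  have hs : (0 : ℝ) ≤ 2 / n := by positivity
  have h1 : ∀ (m : ℕ) (k : ℤ), |phiZ n m k| ≤ Real.sqrt (2 / n) := by
    intro m k
    rw [phiZ, abs_mul, abs_of_nonneg (Real.sqrt_nonneg _)]
    calc Real.sqrt (2 / n) * |Real.sin (k * m * Real.pi / n)|
        ≤ Real.sqrt (2 / n) * 1 :=
          mul_le_mul_of_nonneg_left (Real.abs_sin_le_one _) (Real.sqrt_nonneg _)
      _ = Real.sqrt (2 / n) := mul_one _
  rw [PhiI, abs_mul]
  calc |phiZ n ((i.1 : ℕ) + 1) (coord n y).1| * |phiZ n ((i.2 : ℕ) + 1) (coord n y).2|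
      ≤ Real.sqrt (2 / n) * Real.sqrt (2 / n) :=
        mul_le_mul (h1 _ _) (h1 _ _) (abs_nonneg _) (Real.sqrt_nonneg _)
    _ = 2 / n := Real.mul_self_sqrt hs

lemma gap_bound {n : ℕ} (hn : 2 ≤ n) (i : Lam n) :
    ((((i.1 : ℕ) + 1 : ℕ) : ℝ) ^ 2 + (((i.2 : ℕ) + 1 : ℕ) : ℝ) ^ 2 - 2) / (n : ℝ) ^ 2
      ≤ lamI n i - lamOne n := by
  have hnR : (0 : ℝ) < n := by
    have : 0 < n := by omega
    exact_mod_cast this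
  have key : ∀ a : ℕ, 1 ≤ a → a ≤ n - 1 →
      2 * (((a : ℝ) ^ 2 - 1) / (n : ℝ) ^ 2)
        ≤ Real.cos (Real.pi / n) - Real.cos ((a : ℝ) * Real.pi / n) := by
    intro a ha ha'
    have haR : (1 : ℝ) ≤ (a : ℝ) := by exact_mod_cast ha
    have haR' : (a : ℝ) ≤ (n : ℝ) - 1 := by
      have h1 : (a : ℝ) ≤ ((n - 1 : ℕ) : ℝ) := by exact_mod_cast ha'
      have h2 : ((n - 1 : ℕ) : ℝ) = (n : ℝ) - 1 := by
        have : 1 ≤ n := by omega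
        push_cast [this]; ring
      linarith [h1, h2.le, h2.ge]
    have hcc : Real.cos (Real.pi / n) - Real.cos ((a : ℝ) * Real.pi / n)
        = 2 * Real.sin (((a : ℝ) + 1) * Real.pi / (2 * n))
            * Real.sin (((a : ℝ) - 1) * Real.pi / (2 * n)) := by
      rw [Real.cos_sub_cos]
      rw [show (Real.pi / n + (a : ℝ) * Real.pi / n) / 2 = ((a : ℝ) + 1) * Real.pi / (2 * n) by ring,
          show (Real.pi / n - (a : ℝ) * Real.pi / n) / 2 = -((((a : ℝ) - 1)) * Real.pi / (2 * n)) by ring,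
          Real.sin_neg]
      ring
    rw [hcc]
    have hb1 : (0 : ℝ) ≤ ((a : ℝ) - 1) * Real.pi / (2 * n) := by
      have := Real.pi_pos
      have h0 : (0 : ℝ) ≤ (a : ℝ) - 1 := by linarith
      positivity
    have hb2 : ((a : ℝ) + 1) * Real.pi / (2 * n) ≤ Real.pi / 2 := by
      rw [div_le_div_iff₀ (by positivity) (by norm_num)]
      have := Real.pi_pos
      nlinarith
    have hb3 : ((a : ℝ) - 1) * Real.pi / (2 * n) ≤ Real.pi / 2 := by
      rw [div_le_div_iff₀ (by positivity) (by norm_num)]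
      have := Real.pi_pos
      nlinarith
    have hb0 : (0 : ℝ) ≤ ((a : ℝ) + 1) * Real.pi / (2 * n) := by
      have := Real.pi_pos
      positivity
    have s1 := Real.mul_le_sin hb0 hb2
    have s2 := Real.mul_le_sin hb1 hb3
    have e1 : 2 / Real.pi * (((a : ℝ) + 1) * Real.pi / (2 * n)) = ((a : ℝ) + 1) / n := by
      field_simp
    have e2 : 2 / Real.pi * (((a : ℝ) - 1) * Real.pi / (2 * n)) = ((a : ℝ) - 1) / n := by
      field_simp
    rw [e1] at s1
    rw [e2] at s2
    have hp1 : (0 : ℝ) ≤ ((a : ℝ) - 1) / n := by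
      have h0 : (0 : ℝ) ≤ (a : ℝ) - 1 := by linarith
      positivity
    have hprod : (((a : ℝ) + 1) / n) * (((a : ℝ) - 1) / n)
        ≤ Real.sin (((a : ℝ) + 1) * Real.pi / (2 * n))
          * Real.sin (((a : ℝ) - 1) * Real.pi / (2 * n)) := by
      apply mul_le_mul s1 s2 hp1
      exact le_trans (by positivity) s1
    calc 2 * (((a : ℝ) ^ 2 - 1) / (n : ℝ) ^ 2)
        = 2 * ((((a : ℝ) + 1) / n) * (((a : ℝ) - 1) / n)) := by ring
      _ ≤ 2 * (Real.sin (((a : ℝ) + 1) * Real.pi / (2 * n))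
            * Real.sin (((a : ℝ) - 1) * Real.pi / (2 * n))) := by linarith
      _ = 2 * Real.sin (((a : ℝ) + 1) * Real.pi / (2 * n))
            * Real.sin (((a : ℝ) - 1) * Real.pi / (2 * n)) := by ring
  have k1 := key ((i.1 : ℕ) + 1) (by omega) (by have := i.1.isLt; omega)
  have k2 := key ((i.2 : ℕ) + 1) (by omega) (by have := i.2.isLt; omega)
  rw [lamI, lamOne]
  push_cast
  push_cast at k1 k2
  have hsplit : (((i.1 : ℕ) : ℝ) + 1) ^ 2 / (n : ℝ) ^ 2 + (((i.2 : ℕ) : ℝ) + 1) ^ 2 / (n : ℝ) ^ 2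
      - 2 / (n : ℝ) ^ 2
      = ((((i.1 : ℕ) : ℝ) + 1) ^ 2 - 1) / (n : ℝ) ^ 2
        + ((((i.2 : ℕ) : ℝ) + 1) ^ 2 - 1) / (n : ℝ) ^ 2 := by ring
  have hsplit2 : ((((i.1 : ℕ) : ℝ) + 1) ^ 2 + (((i.2 : ℕ) : ℝ) + 1) ^ 2 - 2) / (n : ℝ) ^ 2
      = ((((i.1 : ℕ) : ℝ) + 1) ^ 2 - 1) / (n : ℝ) ^ 2
        + ((((i.2 : ℕ) : ℝ) + 1) ^ 2 - 1) / (n : ℝ) ^ 2 := by ring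
  linarith [k1, k2, hsplit, hsplit2]

lemma phiZ_one_eq (n : ℕ) (k : ℕ) : phiZ n (0 + 1) ((k : ℤ) + 1) = phi1 n (k + 1) := by
  rw [phiZ, phi1]
  congr 1
  push_cast
  ring

set_option maxHeartbeats 1000000 in
/-- Survival probability asymptotics for the killed rate-1 continuous-time simple random walk
on `Λ_n`: for `t ≫ n²`, `(e^{tΔ_n}𝟙)(x) = φ̂_𝟏(x)e^{−λ_𝟏 t} + o(e^{−λ_𝟏 t})`. -/
theorem survival_probability_continuous :
    ∀ ε : ℝ, 0 < ε → ∃ C : ℝ, 0 < C ∧ ∀ n : ℕ, 2 ≤ n → ∀ t : ℝ, C * (n : ℝ) ^ 2 ≤ t →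
      ∀ x : Lam n,
        |(NormedSpace.exp (t • Delta n)).mulVec (fun _ => (1 : ℝ)) x
            - phiHatOne n x * Real.exp (-(lamOne n) * t)|
          ≤ ε * Real.exp (-(lamOne n) * t) := by
  intro ε hε
  set C : ℝ := 1 + max 0 (Real.log (32 / ε)) with hCdef
  have hC0 : 0 < C := by positivity
  refine ⟨C, hC0, ?_⟩
  intro n hn t ht x
  have hnR : (0 : ℝ) < n := by
    have : 0 < n := by omega
    exact_mod_cast this
  set r : ℝ := Real.exp (-C) with hrdef
  have hr0 : 0 < r := Real.exp_pos _
  have hC1 : 1 ≤ C := by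
    rw [hCdef]
    linarith [le_max_left (0 : ℝ) (Real.log (32 / ε))]
  have hr1 : r < 1 := by
    rw [hrdef, Real.exp_lt_one_iff]
    linarith
  have hr_half : r ≤ 1 / 2 := by
    have h1 : r ≤ Real.exp (-1) := by
      rw [hrdef]
      apply Real.exp_le_exp.2
      linarith
    have h2 : Real.exp (-1) ≤ 1 / 2 := by
      have h3 : (2 : ℝ) ≤ Real.exp 1 := by
        have := Real.add_one_le_exp (1 : ℝ)
        linarith
      rw [Real.exp_neg, ← one_div]
      calc 1 / Real.exp 1 ≤ 1 / 2 := one_div_le_one_div_of_le (by norm_num) h3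
        _ = 1 / 2 := rfl
    linarith
  have hr_eps : 32 * r ≤ ε := by
    rcases le_or_gt (Real.log (32 / ε)) 0 with hl | hl
    · have h32 : 32 / ε ≤ 1 := by
        by_contra hcon
        push_neg at hcon
        linarith [Real.log_pos hcon]
      have hε32 : 32 ≤ ε := by
        rw [div_le_one hε] at h32
        linarith
      linarith
    · have hmax : max 0 (Real.log (32 / ε)) = Real.log (32 / ε) := max_eq_right hl.le
      have hreq : r = Real.exp (-1) * Real.exp (-(Real.log (32 / ε))) := by
        rw [hrdef, hCdef, hmax, ← Real.exp_add]
        congr 1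
        ring
      have hexplog : Real.exp (-(Real.log (32 / ε))) = ε / 32 := by
        rw [Real.exp_neg, Real.exp_log (by positivity), inv_div]
      have he1 : Real.exp (-1 : ℝ) ≤ 1 := by
        have := Real.exp_le_exp.2 (show (-1 : ℝ) ≤ 0 by norm_num)
        rwa [Real.exp_zero] at this
      have he0 : 0 < Real.exp (-1 : ℝ) := Real.exp_pos _
      rw [hreq, hexplog]
      nlinarith
  -- spectral setup
  set i₀ : Lam n := (⟨0, by omega⟩, ⟨0, by omega⟩) with hi₀
  set c : Lam n → ℝ := fun i => ∑ y : Lam n, PhiI n i y with hc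
  have hones : (fun _ : Lam n => (1 : ℝ)) = ∑ i : Lam n, c i • PhiI n i := by
    funext z
    rw [Finset.sum_apply]
    simp only [Pi.smul_apply, smul_eq_mul]
    symm
    calc ∑ i : Lam n, c i * PhiI n i z
        = ∑ i : Lam n, ∑ w : Lam n, PhiI n i w * PhiI n i z := by
          refine Finset.sum_congr rfl fun i _ => ?_
          rw [hc]
          exact Finset.sum_mul _ _ _
      _ = ∑ w : Lam n, ∑ i : Lam n, PhiI n i w * PhiI n i z := Finset.sum_comm
      _ = ∑ w : Lam n, (if w = z then (1 : ℝ) else 0) :=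
          Finset.sum_congr rfl fun w _ => sum_PhiI_mul hn w z
      _ = 1 := by simp
  have hexpi : ∀ i : Lam n, (NormedSpace.exp (t • Delta n)).mulVec (PhiI n i)
      = Real.exp (-(lamI n i) * t) • PhiI n i := by
    intro i
    have h1 : (t • Delta n).mulVec (PhiI n i) = (-(lamI n i) * t) • PhiI n i := by
      rw [Matrix.smul_mulVec, delta_mulVec hn i, smul_smul, mul_comm]
    exact exp_mulVec_eig _ _ _ h1
  have hmv : (NormedSpace.exp (t • Delta n)).mulVec (fun _ => (1 : ℝ)) x
      = ∑ i : Lam n, c i * (Real.exp (-(lamI n i) * t) * PhiI n i x) := by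
    rw [hones]
    have hlin : (NormedSpace.exp (t • Delta n)).mulVec (∑ i : Lam n, c i • PhiI n i)
        = ∑ i : Lam n, c i • ((NormedSpace.exp (t • Delta n)).mulVec (PhiI n i)) := by
      rw [← Matrix.mulVecLin_apply, map_sum]
      refine Finset.sum_congr rfl fun i _ => ?_
      rw [map_smul, Matrix.mulVecLin_apply]
    rw [hlin, Finset.sum_apply]
    refine Finset.sum_congr rfl fun i _ => ?_
    rw [hexpi i]
    simp [smul_eq_mul]
  have hsplit := (Finset.add_sum_erase Finset.univ
    (fun i : Lam n => c i * (Real.exp (-(lamI n i) * t) * PhiI n i x))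
    (Finset.mem_univ i₀)).symm
  have hPhi0 : PhiI n i₀ = phiOne n := by
    funext z
    show phiZ n (0 + 1) (((z.1 : ℕ) : ℤ) + 1)
        * phiZ n (0 + 1) (((z.2 : ℕ) : ℤ) + 1) = _
    rw [phiZ_one_eq n (z.1 : ℕ), phiZ_one_eq n (z.2 : ℕ)]
    rfl
  have hlam0 : lamI n i₀ = lamOne n := by
    rw [lamI, lamOne]
    norm_num
  have hmain : c i₀ * (Real.exp (-(lamI n i₀) * t) * PhiI n i₀ x)
      = phiHatOne n x * Real.exp (-(lamOne n) * t) := by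
    rw [hlam0]
    simp only [hc]
    rw [hPhi0, phiHatOne]
    ring
  set E₁ : ℝ := Real.exp (-(lamOne n) * t) with hE₁
  have hE₁pos : 0 < E₁ := Real.exp_pos _
  have habs_c : ∀ i : Lam n, |c i| ≤ 2 * n := by
    intro i
    simp only [hc]
    calc |∑ y : Lam n, PhiI n i y| ≤ ∑ y : Lam n, |PhiI n i y| :=
          Finset.abs_sum_le_sum_abs _ _
      _ ≤ ∑ _y : Lam n, 2 / (n : ℝ) := Finset.sum_le_sum fun y _ => abs_PhiI_le hn i y
      _ = (((n - 1) * (n - 1) : ℕ) : ℝ) * (2 / n) := by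
          rw [Finset.sum_const, Finset.card_univ]
          have hcard : Fintype.card (Lam n) = (n - 1) * (n - 1) := by
            simp [Fintype.card_prod]
          rw [hcard, nsmul_eq_mul]
      _ ≤ (n : ℝ) ^ 2 * (2 / n) := by
          apply mul_le_mul_of_nonneg_right _ (by positivity)
          have h1 : ((n - 1 : ℕ) : ℝ) ≤ (n : ℝ) := by exact_mod_cast Nat.sub_le n 1
          have h2 : (0 : ℝ) ≤ ((n - 1 : ℕ) : ℝ) := Nat.cast_nonneg _
          push_cast
          nlinarith
      _ = 2 * n := by field_simp
  have hexp_bound : ∀ i : Lam n,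
      Real.exp (-(lamI n i) * t) ≤ Real.exp (-C * (((i.1 : ℕ) : ℝ) + ((i.2 : ℕ) : ℝ))) * E₁ := by
    intro i
    rw [hE₁, ← Real.exp_add]
    apply Real.exp_le_exp.2
    have hgap := gap_bound hn i
    have hg_ge : ((i.1 : ℕ) : ℝ) + ((i.2 : ℕ) : ℝ)
        ≤ ((((i.1 : ℕ) + 1 : ℕ) : ℝ) ^ 2 + (((i.2 : ℕ) + 1 : ℕ) : ℝ) ^ 2 - 2) := by
      push_cast
      nlinarith [(by positivity : (0:ℝ) ≤ ((i.1 : ℕ) : ℝ)), (by positivity : (0:ℝ) ≤ ((i.2 : ℕ) : ℝ))]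
    have hg0 : (0 : ℝ) ≤ (((i.1 : ℕ) + 1 : ℕ) : ℝ) ^ 2 + (((i.2 : ℕ) + 1 : ℕ) : ℝ) ^ 2 - 2 := by
      refine le_trans ?_ hg_ge
      positivity
    have ht0 : 0 ≤ t := le_trans (by positivity) ht
    have h1 : C * ((((i.1 : ℕ) + 1 : ℕ) : ℝ) ^ 2 + (((i.2 : ℕ) + 1 : ℕ) : ℝ) ^ 2 - 2)
        ≤ (lamI n i - lamOne n) * t := by
      have h2 : C * ((((i.1 : ℕ) + 1 : ℕ) : ℝ) ^ 2 + (((i.2 : ℕ) + 1 : ℕ) : ℝ) ^ 2 - 2)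
          = (C * (n : ℝ) ^ 2)
            * (((((i.1 : ℕ) + 1 : ℕ) : ℝ) ^ 2 + (((i.2 : ℕ) + 1 : ℕ) : ℝ) ^ 2 - 2)
              / (n : ℝ) ^ 2) := by
        field_simp
      rw [h2, mul_comm (lamI n i - lamOne n) t]
      exact mul_le_mul ht hgap (by positivity) ht0
    have h3 : C * (((i.1 : ℕ) : ℝ) + ((i.2 : ℕ) : ℝ))
        ≤ C * ((((i.1 : ℕ) + 1 : ℕ) : ℝ) ^ 2 + (((i.2 : ℕ) + 1 : ℕ) : ℝ) ^ 2 - 2) :=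
      mul_le_mul_of_nonneg_left hg_ge hC0.le
    nlinarith [h1, h3]
  have hterm : ∀ i ∈ Finset.univ.erase i₀,
      |c i * (Real.exp (-(lamI n i) * t) * PhiI n i x)|
        ≤ 4 * (r ^ (i.1 : ℕ) * r ^ (i.2 : ℕ)) * E₁ := by
    intro i _
    rw [abs_mul, abs_mul, Real.abs_exp]
    have h1 : |c i| * (Real.exp (-(lamI n i) * t) * |PhiI n i x|)
        ≤ (2 * n) * (Real.exp (-(lamI n i) * t) * (2 / n)) :=
      mul_le_mul (habs_c i)
        (mul_le_mul_of_nonneg_left (abs_PhiI_le hn i x) (Real.exp_pos _).le)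
        (by positivity) (by positivity)
    have h2 : (2 * (n : ℝ)) * (Real.exp (-(lamI n i) * t) * (2 / n))
        = 4 * Real.exp (-(lamI n i) * t) := by
      field_simp
      ring
    have hr_pow : Real.exp (-C * (((i.1 : ℕ) : ℝ) + ((i.2 : ℕ) : ℝ)))
        = r ^ (i.1 : ℕ) * r ^ (i.2 : ℕ) := by
      rw [hrdef, ← Real.exp_nat_mul, ← Real.exp_nat_mul, ← Real.exp_add]
      congr 1
      ring
    have h3 : Real.exp (-(lamI n i) * t) ≤ (r ^ (i.1 : ℕ) * r ^ (i.2 : ℕ)) * E₁ := by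
      rw [← hr_pow]
      exact hexp_bound i
    calc |c i| * (Real.exp (-(lamI n i) * t) * |PhiI n i x|)
        ≤ (2 * n) * (Real.exp (-(lamI n i) * t) * (2 / n)) := h1
      _ = 4 * Real.exp (-(lamI n i) * t) := h2
      _ ≤ 4 * ((r ^ (i.1 : ℕ) * r ^ (i.2 : ℕ)) * E₁) := by linarith
      _ = 4 * (r ^ (i.1 : ℕ) * r ^ (i.2 : ℕ)) * E₁ := by ring
  set S : ℝ := ∑ j : Fin (n - 1), r ^ (j : ℕ) with hSdef
  have hS_le : S ≤ (1 - r)⁻¹ := by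
    rw [hSdef, Fin.sum_univ_eq_sum_range (fun j => r ^ j) (n - 1)]
    have hsummable : Summable (fun j : ℕ => r ^ j) :=
      summable_geometric_of_lt_one hr0.le hr1
    calc ∑ j ∈ Finset.range (n - 1), r ^ j ≤ ∑' j : ℕ, r ^ j :=
          Summable.sum_le_tsum _ (fun j _ => by positivity) hsummable
      _ = (1 - r)⁻¹ := tsum_geometric_of_lt_one hr0.le hr1
  have hS0 : 0 ≤ S := Finset.sum_nonneg fun j _ => by positivity
  have h1r : (0:ℝ) < 1 - r := by linarith
  have hinv : (1 - r)⁻¹ ≤ 1 + 2 * r := by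
    have hx : (1 : ℝ) ≤ (1 - r) * (1 + 2 * r) := by nlinarith
    calc (1 - r)⁻¹ = (1 - r)⁻¹ * 1 := (mul_one _).symm
      _ ≤ (1 - r)⁻¹ * ((1 - r) * (1 + 2 * r)) :=
          mul_le_mul_of_nonneg_left hx (inv_nonneg.2 h1r.le)
      _ = 1 + 2 * r := by
          rw [← mul_assoc, inv_mul_cancel₀ h1r.ne', one_mul]
  have hS1 : S ≤ 1 + 2 * r := hS_le.trans hinv
  have hsum_pow : ∑ i ∈ Finset.univ.erase i₀, (r ^ (i.1 : ℕ) * r ^ (i.2 : ℕ)) = S * S - 1 := by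
    have htot : ∑ i : Lam n, (r ^ (i.1 : ℕ) * r ^ (i.2 : ℕ)) = S * S := by
      rw [hSdef, Finset.sum_mul_sum, Fintype.sum_prod_type]
    have hth := Finset.add_sum_erase Finset.univ
      (fun i : Lam n => r ^ (i.1 : ℕ) * r ^ (i.2 : ℕ)) (Finset.mem_univ i₀)
    have hf0 : r ^ ((i₀.1 : ℕ)) * r ^ ((i₀.2 : ℕ)) = 1 := by
      show r ^ 0 * r ^ 0 = 1
      norm_num
    simp only [hf0] at hth
    linarith [hth, htot]
  have hS2 : S * S - 1 ≤ 8 * r := by nlinarith [hS0, hS1, hr0.le, hr_half]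
  rw [hmv, hsplit, hmain, add_sub_cancel_left]
  calc |∑ i ∈ Finset.univ.erase i₀, c i * (Real.exp (-(lamI n i) * t) * PhiI n i x)|
      ≤ ∑ i ∈ Finset.univ.erase i₀, |c i * (Real.exp (-(lamI n i) * t) * PhiI n i x)| :=
        Finset.abs_sum_le_sum_abs _ _
    _ ≤ ∑ i ∈ Finset.univ.erase i₀, 4 * (r ^ (i.1 : ℕ) * r ^ (i.2 : ℕ)) * E₁ :=
        Finset.sum_le_sum hterm
    _ = 4 * E₁ * ∑ i ∈ Finset.univ.erase i₀, (r ^ (i.1 : ℕ) * r ^ (i.2 : ℕ)) := by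
        rw [Finset.mul_sum]
        exact Finset.sum_congr rfl fun i _ => by ring
    _ = 4 * E₁ * (S * S - 1) := by rw [hsum_pow]
    _ ≤ 4 * E₁ * (8 * r) := by nlinarith [hE₁pos, hS2]
    _ = 32 * r * E₁ := by ring
    _ ≤ ε * E₁ := mul_le_mul_of_nonneg_right hr_eps hE₁pos.le

end DGFFStmt
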